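/- Let H be a Hermitian matrix, Δ an invertible diagonal matrix such that M = ΔHΔ^{-1} has rational entries, and S = {a_1,…,a_d}, T = {b_1,…,b_d} equal-size index subsets such that Δ_{a_j,a_j} · (Δ_{b_j,b_j})^{-1} ∈ ℚ for all j. Then ψ_{S,T}(x) = Σ_j ((xI - H)^{-1})_{a_j, b_j} is a rational function over ℚ, i.e., both the numerator Σ_j adj(xI - H)_{a_j, b_j} and denominator det(xI - H) are polynomials with rational coefficients. -/

import Mathlib

open Matrix Polynomial

/-- If `Δ H Δ⁻¹` has rational entries and `Δ_{a_j,a_j} Δ_{b_j,b_j}⁻¹ ∈ ℚ`,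
then `ψ_{S,T}(x)` is a rational function over `ℚ`: both `det(xI - H)` and
`Σ_j adj(xI - H)_{a_j, b_j}` have rational coefficients. -/
theorem stmt_10 {n : Type*} [Fintype n] [DecidableEq n] {d : ℕ}
    (H : Matrix n n ℂ) (hH : H.IsHermitian)
    (δ : n → ℂ) (hδ : ∀ i, δ i ≠ 0)
    (hrat : ∀ i j, ∃ q : ℚ,
      (Matrix.diagonal δ * H * (Matrix.diagonal δ)⁻¹) i j = (q : ℂ))
    (a b : Fin d → n) (ha : Function.Injective a) (hb : Function.Injective b)
    (hab : ∀ j, ∃ q : ℚ, δ (a j) * (δ (b j))⁻¹ = (q : ℂ)) :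
    (∀ k : ℕ, ∃ q : ℚ, ((Matrix.charmatrix H).det).coeff k = (q : ℂ)) ∧
    (∀ k : ℕ, ∃ q : ℚ,
      (∑ j, (Matrix.charmatrix H).adjugate (a j) (b j)).coeff k = (q : ℂ)) := by
  classical
  set M₀ : Matrix n n ℚ := fun i j => (hrat i j).choose with hM₀
  have hDinv : (Matrix.diagonal δ)⁻¹ = Matrix.diagonal (fun i => (δ i)⁻¹) := by
    refine Matrix.inv_eq_right_inv ?_
    rw [Matrix.diagonal_mul_diagonal]
    rw [show (fun i => δ i * (δ i)⁻¹) = fun _ => (1:ℂ) from funext fun i => mul_inv_cancel₀ (hδ i)]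
    exact Matrix.diagonal_one
  have hM : ∀ i j, H i j = (δ i)⁻¹ * (M₀ i j : ℂ) * δ j := by
    intro i j
    have h : (Matrix.diagonal δ * H * (Matrix.diagonal δ)⁻¹) i j = (M₀ i j : ℂ) :=
      (hrat i j).choose_spec
    rw [hDinv] at h
    simp only [Matrix.mul_diagonal, Matrix.diagonal_mul] at h
    field_simp at h
    rw [div_eq_iff (hδ j)] at h
    have h2 : (δ i)⁻¹ * (δ i * H i j) = (δ i)⁻¹ * ((M₀ i j : ℂ) * δ j) := by rw [h]
    rw [← mul_assoc, inv_mul_cancel₀ (hδ i), one_mul] at h2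
    rw [h2]; ring
  -- key conjugation identity for charmatrix
  have key : Matrix.charmatrix H =
      Matrix.diagonal (fun i => C ((δ i)⁻¹)) *
        Matrix.charmatrix (M₀.map (fun q : ℚ => (q : ℂ))) *
        Matrix.diagonal (fun i => C (δ i)) := by
    refine Matrix.ext fun i j => ?_
    simp only [Matrix.mul_diagonal, Matrix.diagonal_mul]
    rcases eq_or_ne i j with rfl | hij
    · rw [Matrix.charmatrix_apply_eq, Matrix.charmatrix_apply_eq, Matrix.map_apply, hM i i]
      have h1 : C ((δ i)⁻¹) * C (δ i) = (1 : ℂ[X]) := by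
        rw [← C_mul, inv_mul_cancel₀ (hδ i), Polynomial.C_1]
      simp only [Polynomial.C_mul]
      linear_combination (-(X : ℂ[X])) * h1
    · rw [Matrix.charmatrix_apply_ne _ _ _ hij, Matrix.charmatrix_apply_ne _ _ _ hij,
        Matrix.map_apply, hM i j]
      simp only [Polynomial.C_mul]
      ring
  have hcast : (M₀.map (fun q : ℚ => (q : ℂ))) = M₀.map (Rat.castHom ℂ) := rfl
  have hprod1 : ∀ i, C ((δ i)⁻¹) * C (δ i) = (1 : ℂ[X]) := fun i => by
    rw [← C_mul, inv_mul_cancel₀ (hδ i), Polynomial.C_1]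
  constructor
  · -- determinant part
    intro k
    have hdet : (Matrix.charmatrix H).det = (M₀.map (Rat.castHom ℂ)).charpoly := by
      rw [key, Matrix.det_mul, Matrix.det_mul, Matrix.det_diagonal, Matrix.det_diagonal]
      rw [mul_comm ((∏ i, C ((δ i)⁻¹)) * _), ← mul_assoc, mul_comm (∏ i, C (δ i)),
        ← Finset.prod_mul_distrib]
      rw [Finset.prod_congr rfl fun i _ => hprod1 i, Finset.prod_const_one, one_mul]
      rw [hcast, Matrix.charpoly]
    refine ⟨M₀.charpoly.coeff k, ?_⟩
    rw [hdet, Matrix.charpoly_map, Polynomial.coeff_map]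
    simp
  · -- adjugate part
    intro k
    have hadj : (Matrix.charmatrix H).adjugate =
        (Matrix.diagonal (fun i => C (δ i))).adjugate *
          ((Matrix.charmatrix (M₀.map (fun q : ℚ => (q : ℂ)))).adjugate *
            (Matrix.diagonal (fun i => C ((δ i)⁻¹))).adjugate) := by
      rw [key, Matrix.adjugate_mul_distrib, Matrix.adjugate_mul_distrib]
    have hadjN : (Matrix.charmatrix (M₀.map (fun q : ℚ => (q : ℂ)))).adjugate =
        ((Matrix.charmatrix M₀).adjugate).map
          (Polynomial.map (Rat.castHom ℂ)) := by
      rw [hcast, Matrix.charmatrix_map]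
      have := (Polynomial.mapRingHom (Rat.castHom ℂ)).map_adjugate (Matrix.charmatrix M₀)
      simpa [RingHom.mapMatrix_apply, Polynomial.coe_mapRingHom] using this.symm
    -- entrywise formula
    have hentry : ∀ j : Fin d, ((Matrix.charmatrix H).adjugate (a j) (b j)).coeff k =
        ((hab j).choose : ℂ)⁻¹ *
          (((Matrix.charmatrix M₀).adjugate (a j) (b j)).coeff k : ℂ) := by
      intro j
      rw [hadj, Matrix.adjugate_diagonal, Matrix.adjugate_diagonal, hadjN]
      simp only [Matrix.diagonal_mul, Matrix.mul_diagonal]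
      rw [← map_prod, ← map_prod]
      have hre : ∀ (u v : ℂ) (P : ℂ[X]), C u * (P * C v) = C (u * v) * P := by
        intro u v P
        rw [Polynomial.C_mul]; ring
      rw [hre, Polynomial.coeff_C_mul, Matrix.map_apply, Polynomial.coeff_map]
      have hq := (hab j).choose_spec
      have h1 : (∏ t ∈ Finset.univ.erase (a j), δ t) * δ (a j) = ∏ t, δ t :=
        Finset.prod_erase_mul _ _ (Finset.mem_univ _)
      have h2 : (∏ t ∈ Finset.univ.erase (b j), (δ t)⁻¹) * (δ (b j))⁻¹ =
          ∏ t, (δ t)⁻¹ :=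
        Finset.prod_erase_mul _ _ (Finset.mem_univ _)
      have hP : (∏ t, δ t) ≠ 0 := Finset.prod_ne_zero_iff.mpr fun t _ => hδ t
      have hsc : (∏ t ∈ Finset.univ.erase (a j), δ t) *
          (∏ t ∈ Finset.univ.erase (b j), (δ t)⁻¹) = ((hab j).choose : ℂ)⁻¹ := by
        rw [(eq_mul_inv_iff_mul_eq₀ (hδ (a j))).mpr h1,
          (eq_mul_inv_iff_mul_eq₀ (inv_ne_zero (hδ (b j)))).mpr h2, ← hq]
        rw [Finset.prod_inv_distrib, inv_inv, mul_inv, inv_inv]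
        field_simp
      rw [hsc]
      simp
    refine ⟨∑ j, ((hab j).choose)⁻¹ *
      ((Matrix.charmatrix M₀).adjugate (a j) (b j)).coeff k, ?_⟩
    rw [Polynomial.finset_sum_coeff]
    push_cast
    exact Finset.sum_congr rfl fun j _ => hentry j
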